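/- For all natural numbers n, k, j with j \le n, the alternating sum \(\sum_{i=j}^{n} (-1)^{i+j-1} \binom{n}{i} \binom{i}{j} \binom{n-i}{2(k-j)} = 0\), provided \(n - 2k + j \ge 1\) (i.e., the inner binomial range is nontrivial). -/

import Mathlib

/-- Lemma (main:b): for `j ≤ n` and `n - 2k + j ≥ 1`,
`∑_{i=j}^n (-1)^{i+j-1} C(n,i) C(i,j) C(n-i, 2(k-j)) = 0`,
with the convention `C(n-i, 2(k-j)) = 0` when `k < j`. -/
theorem stmt1 (n k j : ℕ) (hjn : j ≤ n) (h : 2 * k + 1 ≤ n + j) :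
    ∑ i ∈ Finset.Icc j n,
      (-1 : ℤ) ^ (i + j + 1) * (n.choose i : ℤ) * (i.choose j : ℤ) *
        (if k < j then 0 else ((n - i).choose (2 * (k - j)) : ℤ))
      = 0 := by
  rcases lt_or_ge k j with hkj | hkj
  · simp [hkj]
  · simp only [if_neg (not_lt.mpr hkj)]
    set N := n - j with hN
    set r := 2 * (k - j) with hr
    have hrN : r + 1 ≤ N := by omega
    rw [show Finset.Icc j n = Finset.Ico j (n + 1) by rfl, Finset.sum_Ico_eq_sum_range]
    have hrange : n + 1 - j = N + 1 := by omega
    rw [hrange]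
    have key : ∀ m ∈ Finset.range (N + 1),
        (-1 : ℤ) ^ (j + m + j + 1) * (n.choose (j + m) : ℤ) * ((j + m).choose j : ℤ) *
          ((n - (j + m)).choose r : ℤ)
        = (-(N.choose r : ℤ) * (n.choose j : ℤ)) *
            ((-1) ^ m * ((N - r).choose m : ℤ)) := by
      intro m hm
      simp only [Finset.mem_range] at hm
      have hm' : j + m ≤ n := by omega
      have hcc : n.choose (j + m) * (j + m).choose j = n.choose j * N.choose m := by
        have := Nat.choose_mul (n := n) (Nat.le_add_right j m)
        simpa [hN] using this
      have hcc2 : N.choose m * (N - m).choose r = N.choose r * (N - r).choose m := by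
        rcases le_or_gt (m + r) N with hmr | hmr
        · have h1 := Nat.choose_mul (n := N) (k := m + r) (s := m) (Nat.le_add_right m r)
          have h2 := Nat.choose_mul (n := N) (k := m + r) (s := r) (Nat.le_add_left r m)
          rw [Nat.add_sub_cancel_left] at h1
          rw [Nat.add_sub_cancel] at h2
          have hsym : (m + r).choose m = (m + r).choose r := by
            rw [← Nat.choose_symm (Nat.le_add_right m r), Nat.add_sub_cancel_left]
          rw [← h1, ← h2, hsym]
        · have e1 : (N - m).choose r = 0 := Nat.choose_eq_zero_of_lt (by omega)
          have e2 : (N - r).choose m = 0 := Nat.choose_eq_zero_of_lt (by omega)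
          rw [e1, e2, Nat.mul_zero, Nat.mul_zero]
      have h1 : n - (j + m) = N - m := by omega
      have hsign : (-1 : ℤ) ^ (j + m + j + 1) = -(-1 : ℤ) ^ m := by
        rw [show j + m + j + 1 = m + 2 * j + 1 by ring, pow_succ, pow_add, pow_mul,
          neg_one_sq, one_pow, mul_one, mul_neg_one]
      rw [hsign, h1]
      have : (n.choose (j + m) : ℤ) * ((j + m).choose j : ℤ) * ((N - m).choose r : ℤ)
          = (n.choose j : ℤ) * ((N.choose r : ℤ) * ((N - r).choose m : ℤ)) := by
        have e : n.choose (j + m) * (j + m).choose j * ((N - m).choose r)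
            = n.choose j * (N.choose r * ((N - r).choose m)) := by
          rw [hcc, Nat.mul_assoc, hcc2]
        exact_mod_cast e
      linear_combination (-(-1 : ℤ) ^ m) * this
    rw [Finset.sum_congr rfl key, ← Finset.mul_sum]
    have hsub : ∑ m ∈ Finset.range (N + 1), (-1 : ℤ) ^ m * ((N - r).choose m : ℤ)
        = ∑ m ∈ Finset.range (N - r + 1), (-1 : ℤ) ^ m * ((N - r).choose m : ℤ) := by
      refine (Finset.sum_subset (by intro x hx; simp_all; omega) ?_).symm
      intro x _ hx
      simp only [Finset.mem_range, not_lt] at hx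
      rw [Nat.choose_eq_zero_of_lt (by omega)]
      simp
    rw [hsub, Int.alternating_sum_range_choose_of_ne (by omega), mul_zero]
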